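/- arXiv:2402.03101 — 2 statements merged into one kernel-verified Lean document; each statement's English description precedes it below -/
import Mathlib

section
/- Let α ∈ (0,1] and let a be a populated pre-multi-index. Then the scaling of a satisfies |a| ≥ −2 + α, with equality if and only if a = 1^𝔥_0 (the pre-multi-index whose only nonzero entry is a single 1 in the 𝔥-component at index 0). -/
/-- The seven labels 𝔅 = {𝔟,𝔠,𝔡,𝔢,𝔣,𝔤,𝔥}. -/
inductive Lbl : Type
  | b | c | d | e | f | g | h
  deriving DecidableEq

instance instFintypeLbl : Fintype Lbl :=
  ⟨{Lbl.b, Lbl.c, Lbl.d, Lbl.e, Lbl.f, Lbl.g, Lbl.h}, fun x => by cases x <;> simp⟩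

/-- Size 𝔰(q) = Σᵢ qᵢ of a finitely supported sequence. -/
def seqSize (q : ℕ →₀ ℕ) : ℕ := q.sum fun _ n => n

/-- Order 𝔬(q) = Σᵢ i·qᵢ of a finitely supported sequence. -/
def seqOrder (q : ℕ →₀ ℕ) : ℕ := q.sum fun i n => i * n

/-- Length 𝔩(q) = max of the support of q (0 if q = 0). -/
def seqLen (q : ℕ →₀ ℕ) : ℕ := q.support.sup id

/-- A pre-multi-index: a family of seven finitely supported sequences. -/
abbrev PMI : Type := Lbl → (ℕ →₀ ℕ)

/-- Size of a pre-multi-index. -/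
def pmiSize (a : PMI) : ℕ := ∑ k : Lbl, seqSize (a k)

/-- Order of a pre-multi-index. -/
def pmiOrder (a : PMI) : ℕ :=
  (∑ k : Lbl, seqOrder (a k)) + seqSize (a Lbl.d) + seqSize (a Lbl.f)
    + 2 * seqSize (a Lbl.g)

/-- Length of a pre-multi-index. -/
def pmiLen (a : PMI) : ℕ := Finset.univ.sup fun k : Lbl => seqLen (a k)

/-- A pre-multi-index is populated if 𝔰(a) = 𝔬(a) + 1. -/
def Populated (a : PMI) : Prop := pmiSize a = pmiOrder a + 1

/-- The scaling |a| of a pre-multi-index, for a real parameter α. -/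
noncomputable def scaling (α : ℝ) (a : PMI) : ℝ :=
  -(2 - α) * (pmiSize a : ℝ) + 2 * (pmiOrder a : ℝ)
    + (2 - α) * ((seqSize (a Lbl.b) : ℝ) + (seqSize (a Lbl.c) : ℝ) + (seqSize (a Lbl.e) : ℝ))
    + (1 - α) * ((seqSize (a Lbl.d) : ℝ) + (seqSize (a Lbl.f) : ℝ))
    - α * (seqSize (a Lbl.g) : ℝ)

/-- 1^𝔨_k : the pre-multi-index whose only nonzero entry is a single 1 in the
𝔨-component at index k. -/
noncomputable def onePMI (k : Lbl) (n : ℕ) : PMI :=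
  fun k' => if k' = k then Finsupp.single n 1 else 0

/-- A derivator (𝔨₀,𝔨₁,k₀,k₁). -/
def IsDerivator (l₀ l₁ : Lbl) (k₀ k₁ : ℕ) : Prop :=
  (l₀ = l₁ ∧ k₁ = k₀ + 1) ∨
    (((l₀ = Lbl.c ∧ l₁ = Lbl.d) ∨ (l₀ = Lbl.e ∧ l₁ = Lbl.f) ∨ (l₀ = Lbl.f ∧ l₁ = Lbl.g))
      ∧ k₁ = k₀)

lemma sumLbl (f : Lbl → ℕ) : ∑ k : Lbl, f k = f .b + f .c + f .d + f .e + f .f + f .g + f .h := by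
  have : (Finset.univ : Finset Lbl) = {.b, .c, .d, .e, .f, .g, .h} := by decide
  rw [this]
  simp [Finset.sum_insert, Finset.mem_insert]
  ring

lemma seqSize_zero {q : ℕ →₀ ℕ} (h : seqSize q = 0) : q = 0 := by
  ext i
  by_contra hi
  have hmem : i ∈ q.support := Finsupp.mem_support_iff.2 (by simpa using hi)
  have := Finset.sum_eq_zero_iff.mp h i hmem
  simp at this
  exact hi (by simp [this])

lemma seq_single {q : ℕ →₀ ℕ} (hs : seqSize q = 1) (ho : seqOrder q = 0) :
    q = Finsupp.single 0 1 := by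
  have hq : q = Finsupp.single 0 (q 0) := by
    ext i
    rcases Nat.eq_zero_or_pos i with rfl | hi
    · simp
    · rw [Finsupp.single_apply, if_neg (by omega)]
      by_contra hne
      have hmem : i ∈ q.support := Finsupp.mem_support_iff.2 hne
      have h2 := Finset.sum_eq_zero_iff.mp ho i hmem
      rcases Nat.mul_eq_zero.mp h2 with h' | h' <;> omega
  rw [hq] at hs ⊢
  rw [seqSize, Finsupp.sum_single_index rfl] at hs
  rw [hs]

lemma seqSize_single (n m : ℕ) : seqSize (Finsupp.single n m) = m := by
  rw [seqSize, Finsupp.sum_single_index rfl]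

lemma seqOrder_single0 (m : ℕ) : seqOrder (Finsupp.single 0 m) = 0 := by
  rw [seqOrder, Finsupp.sum_single_index]
  · simp
  · simp

theorem stmt7 (α : ℝ) (hα : α ∈ Set.Ioc (0:ℝ) 1) (a : PMI) (ha : Populated a) :
    -2 + α ≤ scaling α a ∧ (scaling α a = -2 + α ↔ a = onePMI Lbl.h 0) := by
  obtain ⟨hα0, hα1⟩ := hα
  set sb := seqSize (a .b) with hsb
  set sc := seqSize (a .c) with hsc
  set sd := seqSize (a .d) with hsd
  set se := seqSize (a .e) with hse
  set sf := seqSize (a .f) with hsf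
  set sg := seqSize (a .g) with hsg
  set sh := seqSize (a .h) with hsh
  set T := ∑ k : Lbl, seqOrder (a k) with hT
  have hS : pmiSize a = sb + sc + sd + se + sf + sg + sh := sumLbl _
  have hO : pmiOrder a = T + sd + sf + 2 * sg := rfl
  have h1 : ((sb:ℝ) + sc + sd + se + sf + sg + sh) = (T + sd + sf + 2*sg) + 1 := by
    have : sb + sc + sd + se + sf + sg + sh = T + sd + sf + 2*sg + 1 := by
      rw [← hS, ← hO]; exact ha
    exact_mod_cast this
  have key : scaling α a
      = -2 + α + α*(T:ℝ) + α*(sg:ℝ) + ((sd:ℝ) + (sf:ℝ)) + (2-α)*((sb:ℝ)+(sc:ℝ)+(se:ℝ)) := by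
    rw [scaling, hS, hO]
    push_cast
    linear_combination (α - 2) * h1
  have hTn : (0:ℝ) ≤ (T:ℝ) := Nat.cast_nonneg _
  have hsgn : (0:ℝ) ≤ (sg:ℝ) := Nat.cast_nonneg _
  have hsdn : (0:ℝ) ≤ (sd:ℝ) := Nat.cast_nonneg _
  have hsfn : (0:ℝ) ≤ (sf:ℝ) := Nat.cast_nonneg _
  have hsbn : (0:ℝ) ≤ (sb:ℝ) := Nat.cast_nonneg _
  have hscn : (0:ℝ) ≤ (sc:ℝ) := Nat.cast_nonneg _
  have hsen : (0:ℝ) ≤ (se:ℝ) := Nat.cast_nonneg _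
  have t1 : (0:ℝ) ≤ α*(T:ℝ) := mul_nonneg hα0.le hTn
  have t2 : (0:ℝ) ≤ α*(sg:ℝ) := mul_nonneg hα0.le hsgn
  have t3 : (0:ℝ) ≤ (2-α)*((sb:ℝ)+(sc:ℝ)+(se:ℝ)) := by
    apply mul_nonneg (by linarith); linarith
  constructor
  · rw [key]; linarith
  constructor
  · intro heq
    rw [key] at heq
    have hT0 : (T:ℝ) = 0 := by
      have : α*(T:ℝ) = 0 := by linarith
      rcases mul_eq_zero.mp this with h | h
      · exact absurd h (ne_of_gt hα0)
      · exact h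
    have hg0 : (sg:ℝ) = 0 := by
      have : α*(sg:ℝ) = 0 := by linarith
      rcases mul_eq_zero.mp this with h | h
      · exact absurd h (ne_of_gt hα0)
      · exact h
    have hbce : (sb:ℝ)+(sc:ℝ)+(se:ℝ) = 0 := by
      have : (2-α)*((sb:ℝ)+(sc:ℝ)+(se:ℝ)) = 0 := by linarith
      rcases mul_eq_zero.mp this with h | h
      · linarith
      · exact h
    have hTz : T = 0 := by exact_mod_cast hT0
    have hgz : sg = 0 := by exact_mod_cast hg0
    have hbz : sb = 0 := by
      have hx : (sb:ℝ) = 0 := by linarith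
      exact_mod_cast hx
    have hcz : sc = 0 := by
      have hx : (sc:ℝ) = 0 := by linarith
      exact_mod_cast hx
    have hez : se = 0 := by
      have hx : (se:ℝ) = 0 := by linarith
      exact_mod_cast hx
    have hdz : sd = 0 := by
      have hx : (sd:ℝ) = 0 := by linarith
      exact_mod_cast hx
    have hfz : sf = 0 := by
      have hx : (sf:ℝ) = 0 := by linarith
      exact_mod_cast hx
    have hhz : sh = 1 := by
      have : ((sh:ℝ)) = 1 := by
        rw [hbz, hcz, hdz, hez, hfz, hgz, hTz] at h1; push_cast at h1 ⊢; linarith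
      exact_mod_cast this
    have hoh : seqOrder (a .h) = 0 := by
      have := sumLbl (fun k => seqOrder (a k))
      rw [← hT] at this
      omega
    funext k
    cases k
    · rw [seqSize_zero hbz]; simp [onePMI]
    · rw [seqSize_zero hcz]; simp [onePMI]
    · rw [seqSize_zero hdz]; simp [onePMI]
    · rw [seqSize_zero hez]; simp [onePMI]
    · rw [seqSize_zero hfz]; simp [onePMI]
    · rw [seqSize_zero hgz]; simp [onePMI]
    · rw [seq_single hhz hoh]; simp [onePMI]
  · intro haeq
    subst haeq
    have e1 : pmiSize (onePMI Lbl.h 0) = 1 := by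
      rw [pmiSize, sumLbl]
      simp [onePMI, seqSize_single, seqSize]
    have e2 : pmiOrder (onePMI Lbl.h 0) = 0 := by
      rw [pmiOrder, sumLbl]
      simp [onePMI, seqOrder_single0, seqOrder, seqSize]
    rw [scaling, e1, e2]
    have e3 : ∀ k, k ≠ Lbl.h → seqSize (onePMI Lbl.h 0 k) = 0 := by
      intro k hk; simp [onePMI, hk, seqSize]
    rw [e3 _ (by simp), e3 _ (by simp), e3 _ (by simp), e3 _ (by simp), e3 _ (by simp),
      e3 _ (by simp)]
    push_cast
    ring
end

section
/- Let α ∈ (0,1], let Γ = ⌊4/α⌋ and δ = −2 + α + (α/2)(Γ+1), and let κ be a real number with 0 < κ ≤ α/2 and κ ≤ δ/(2Γ+2). If a is a populated pre-multi-index with 𝔬(a) ≥ Γ + 1, then |a| − 1 + (α−1−κ)·(𝔰(a^𝔠) + 2𝔰(a^𝔢) + 𝔰(a^𝔣)) ≥ −1 + α. -/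
instance : Fintype Lbl :=
  ⟨{Lbl.b, Lbl.c, Lbl.d, Lbl.e, Lbl.f, Lbl.g, Lbl.h}, fun x => by cases x <;> simp⟩

theorem stmt10 (α : ℝ) (hα : α ∈ Set.Ioc (0:ℝ) 1) (κ : ℝ)
    (hκpos : 0 < κ) (hκ1 : κ ≤ α / 2)
    (hκ2 : κ ≤ (-2 + α + (α / 2) * ((⌊4 / α⌋₊ : ℝ) + 1)) / (2 * (⌊4 / α⌋₊ : ℝ) + 2))
    (a : PMI) (ha : Populated a) (hord : ⌊4 / α⌋₊ + 1 ≤ pmiOrder a) :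
    -1 + α ≤
      scaling α a - 1
        + (α - 1 - κ) * ((seqSize (a Lbl.c) : ℝ) + 2 * (seqSize (a Lbl.e) : ℝ)
            + (seqSize (a Lbl.f) : ℝ)) := by
  obtain ⟨hα0, hα1⟩ := hα
  have hs : (pmiSize a : ℝ) = (pmiOrder a : ℝ) + 1 := by
    rw [ha]; push_cast; ring
  have hsum : seqSize (a Lbl.d) + seqSize (a Lbl.f) + 2 * seqSize (a Lbl.g)
      ≤ pmiOrder a := by
    unfold pmiOrder; omega
  have hsumR : (seqSize (a Lbl.d) : ℝ) + (seqSize (a Lbl.f) : ℝ)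
      + 2 * (seqSize (a Lbl.g) : ℝ) ≤ (pmiOrder a : ℝ) := by
    exact_mod_cast hsum
  have hfloor : (4 : ℝ) / α < (⌊4 / α⌋₊ : ℝ) + 1 := Nat.lt_floor_add_one _
  have hordR : (⌊4 / α⌋₊ : ℝ) + 1 ≤ (pmiOrder a : ℝ) := by exact_mod_cast hord
  have h4 : (4 : ℝ) < α * (pmiOrder a : ℝ) := by
    have := (div_lt_iff₀ hα0).mp (lt_of_lt_of_le hfloor hordR)
    linarith
  have nb : (0:ℝ) ≤ (seqSize (a Lbl.b) : ℝ) := Nat.cast_nonneg _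
  have nc : (0:ℝ) ≤ (seqSize (a Lbl.c) : ℝ) := Nat.cast_nonneg _
  have nd : (0:ℝ) ≤ (seqSize (a Lbl.d) : ℝ) := Nat.cast_nonneg _
  have ne' : (0:ℝ) ≤ (seqSize (a Lbl.e) : ℝ) := Nat.cast_nonneg _
  have nf : (0:ℝ) ≤ (seqSize (a Lbl.f) : ℝ) := Nat.cast_nonneg _
  have h1 : (0:ℝ) ≤ (α/2) * ((pmiOrder a : ℝ) - (seqSize (a Lbl.d) : ℝ)
      - (seqSize (a Lbl.f) : ℝ) - 2 * (seqSize (a Lbl.g) : ℝ)) := by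
    apply mul_nonneg (by linarith); linarith
  have h2 : (0:ℝ) ≤ (α/2 - κ) * (seqSize (a Lbl.f) : ℝ) :=
    mul_nonneg (by linarith) nf
  have h3 : (0:ℝ) ≤ (2 - α) * (seqSize (a Lbl.b) : ℝ) :=
    mul_nonneg (by linarith) nb
  have h5 : (0:ℝ) ≤ (1 - κ) * (seqSize (a Lbl.c) : ℝ) :=
    mul_nonneg (by linarith) nc
  have h6 : (0:ℝ) ≤ (α - 2*κ) * (seqSize (a Lbl.e) : ℝ) :=
    mul_nonneg (by linarith) ne'
  have h7 : (0:ℝ) ≤ (1 - α/2) * (seqSize (a Lbl.d) : ℝ) :=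
    mul_nonneg (by linarith) nd
  unfold scaling
  rw [hs]
  nlinarith [h1, h2, h3, h5, h6, h7, h4]
end
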